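/- Let G be a non-degenerate [n,k,d]_q code with k > 2, Singleton defect s > 0, and n > m^{s−1}(k−1,q) + 2. Then G is projective. -/

import Mathlib

/-- The number of points (with multiplicity) of the projective system `G`
lying on the hyperplane `ker φ`. -/
noncomputable def hypCount {F : Type*} [Field F] [DecidableEq F] {n k : ℕ}
    (G : Fin n → Fin k → F) (φ : (Fin k → F) →ₗ[F] F) : ℕ :=
  (Finset.univ.filter fun i => φ (G i) = 0).card

/-- `G` is (the projective system of) a non-degenerate linear `[n,k,d]_q` code:
an `n`-multiset of nonzero points spanning `PG(k-1,q)`, every hyperplane containing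
at most `n - d` points, and some hyperplane (a secant) containing exactly `n - d`. -/
def IsCodePS (F : Type*) [Field F] [DecidableEq F] (n k d : ℕ)
    (G : Fin n → Fin k → F) : Prop :=
  0 < d ∧ (∀ i, G i ≠ 0) ∧ Submodule.span F (Set.range G) = ⊤ ∧
  (∀ φ : (Fin k → F) →ₗ[F] F, φ ≠ 0 → hypCount G φ + d ≤ n) ∧
  (∃ φ : (Fin k → F) →ₗ[F] F, φ ≠ 0 ∧ hypCount G φ + d = n)

/-- `mPar F s k` is `m^s(k,q)`: the maximum length of a non-degenerate
`[n,k,d]_q` code with Singleton defect `s = n - k + 1 - d`. -/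
noncomputable def mPar (F : Type*) [Field F] [Fintype F] [DecidableEq F] (s k : ℕ) : ℕ :=
  sSup {n : ℕ | ∃ d : ℕ, ∃ G : Fin n → Fin k → F, IsCodePS F n k d G ∧ d + k + s = n + 1}

section Aux
variable {F : Type*} [Field F] [DecidableEq F]

noncomputable def dualVec {k : ℕ} (a : Fin k → F) : (Fin k → F) →ₗ[F] F :=
  ∑ j, a j • LinearMap.proj j

lemma dualVec_apply {k : ℕ} (a x : Fin k → F) : dualVec a x = ∑ j, a j * x j := by
  simp [dualVec, mul_comm]

lemma dualVec_zero {k : ℕ} : (dualVec (0 : Fin k → F)) = 0 := by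
  ext x; simp [dualVec_apply]

lemma dualVec_single {k : ℕ} (a : Fin k → F) (j : Fin k) :
    dualVec a (Pi.single j 1) = a j := by
  rw [dualVec_apply]
  simp [Pi.single_apply]

lemma dualVec_ne_zero {k : ℕ} {a : Fin k → F} (ha : a ≠ 0) : dualVec a ≠ 0 := by
  intro h
  apply ha
  funext j
  have := congrArg (fun ψ : (Fin k → F) →ₗ[F] F => ψ (Pi.single j 1)) h
  simpa [dualVec_single] using this

lemma dualVec_surj {k : ℕ} (ψ : (Fin k → F) →ₗ[F] F) :
    ∃ a : Fin k → F, dualVec a = ψ ∧ (ψ ≠ 0 → a ≠ 0) := by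
  refine ⟨fun j => ψ (Pi.single j 1), ?_, ?_⟩
  · apply LinearMap.ext; intro x
    rw [dualVec_apply]
    have hx : x = ∑ j, x j • (Pi.single j (1 : F) : Fin k → F) := by
      funext r
      simp [Pi.single_apply]
    conv_rhs => rw [hx]
    rw [map_sum]
    simp [mul_comm]
  · intro hψ ha
    apply hψ
    apply LinearMap.ext; intro x
    have hx : x = ∑ j, x j • (Pi.single j (1 : F) : Fin k → F) := by
      funext r
      simp [Pi.single_apply]
    rw [hx, map_sum]
    have : ∀ j, ψ (Pi.single j (1:F)) = 0 := fun j => congrFun ha j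
    simp [this]

lemma exists_perp {k : ℕ} (hk : 2 ≤ k) (x : Fin k → F) (hx : x ≠ 0) :
    ∃ a : Fin k → F, a ≠ 0 ∧ ∑ j, a j * x j = 0 := by
  obtain ⟨j₀, hj₀⟩ : ∃ j, x j ≠ 0 := by
    by_contra h
    push_neg at h
    exact hx (funext fun j => h j)
  obtain ⟨j₁, hj₁⟩ : ∃ j : Fin k, j ≠ j₀ :=
    Fintype.exists_ne_of_one_lt_card (by rw [Fintype.card_fin]; omega) j₀
  refine ⟨Pi.single j₁ (x j₀) - Pi.single j₀ (x j₁), ?_, ?_⟩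
  · intro h
    have := congrFun h j₁
    simp [Pi.single_apply, hj₁] at this
    exact hj₀ this
  · simp only [Pi.sub_apply, sub_mul, Finset.sum_sub_distrib, Pi.single_apply, ite_mul, zero_mul]
    rw [Finset.sum_ite_eq' Finset.univ j₁, Finset.sum_ite_eq' Finset.univ j₀]
    simp only [Finset.mem_univ, if_true]
    ring

lemma hypCount_eq_sum {n k : ℕ} (G : Fin n → Fin k → F) (φ : (Fin k → F) →ₗ[F] F) :
    hypCount G φ = ∑ i, if φ (G i) = 0 then 1 else 0 := by
  classical
  rw [hypCount]
  rw [Finset.card_filter]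


lemma hypCount_snoc {n k : ℕ} (G : Fin n → Fin k → F) (x : Fin k → F)
    (φ : (Fin k → F) →ₗ[F] F) :
    hypCount (Fin.snoc G x) φ = hypCount G φ + if φ x = 0 then 1 else 0 := by
  rw [hypCount_eq_sum, hypCount_eq_sum, Fin.sum_univ_castSucc]
  simp

lemma pad {n k d : ℕ} (hk : 2 ≤ k) (G : Fin n → Fin k → F) (hG : IsCodePS F n k d G) :
    ∃ G' : Fin (n + 1) → Fin k → F, IsCodePS F (n + 1) k d G' := by
  obtain ⟨hd, hnz, hspan, hbound, φ₀, hφ₀, hsec⟩ := hG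
  obtain ⟨a, hadv, hane⟩ := dualVec_surj φ₀
  obtain ⟨x, hx, hxperp⟩ := exists_perp hk a (hane hφ₀)
  have hφ₀x : φ₀ x = 0 := by
    rw [← hadv, dualVec_apply]
    simpa [mul_comm] using hxperp
  refine ⟨Fin.snoc G x, hd, ?_, ?_, ?_, φ₀, hφ₀, ?_⟩
  · intro i
    refine Fin.lastCases ?_ ?_ i
    · simpa using hx
    · intro i; simpa using hnz i
  · rw [eq_top_iff, ← hspan]
    apply Submodule.span_mono
    rintro _ ⟨i, rfl⟩
    exact ⟨i.castSucc, by simp⟩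
  · intro φ hφ
    have := hbound φ hφ
    rw [hypCount_snoc]
    split <;> omega
  · have := hsec
    rw [hypCount_snoc, if_pos hφ₀x]
    omega

lemma pad_iter {n k d : ℕ} (hk : 2 ≤ k) (t : ℕ) (G : Fin n → Fin k → F)
    (hG : IsCodePS F n k d G) :
    ∃ G' : Fin (n + t) → Fin k → F, IsCodePS F (n + t) k d G' := by
  induction t with
  | zero => exact ⟨G, hG⟩
  | succ t ih =>
    obtain ⟨G', hG'⟩ := ih
    obtain ⟨G'', hG''⟩ := pad hk G' hG'
    exact ⟨G'', hG''⟩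

lemma length_le_of_hypCount_le [Fintype F] {n k : ℕ} (hk : 2 ≤ k) (G : Fin n → Fin k → F)
    (hGnz : ∀ i, G i ≠ 0) (c : ℕ)
    (hc : ∀ ψ : (Fin k → F) →ₗ[F] F, ψ ≠ 0 → hypCount G ψ ≤ c) :
    n ≤ Fintype.card (Fin k → F) * c := by
  classical
  set A : Finset (Fin k → F) := Finset.univ.filter (fun a => a ≠ 0) with hA
  have key : ∀ i : Fin n, 1 ≤ ∑ a ∈ A, if dualVec a (G i) = 0 then 1 else 0 := by
    intro i
    obtain ⟨a, ha, hperp⟩ := exists_perp hk (G i) (hGnz i)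
    have hmem : a ∈ A := by simp [hA, ha]
    have h1 : (1:ℕ) = if dualVec a (G i) = 0 then 1 else 0 := by
      rw [dualVec_apply, if_pos hperp]
    exact le_trans (le_of_eq h1)
      (Finset.single_le_sum (f := fun a => if dualVec a (G i) = 0 then 1 else 0)
        (fun _ _ => Nat.zero_le _) hmem)
  calc n = ∑ _i : Fin n, 1 := by simp
    _ ≤ ∑ i : Fin n, ∑ a ∈ A, (if dualVec a (G i) = 0 then 1 else 0) :=
        Finset.sum_le_sum (fun i _ => key i)
    _ = ∑ a ∈ A, ∑ i : Fin n, (if dualVec a (G i) = 0 then 1 else 0) := Finset.sum_comm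
    _ = ∑ a ∈ A, hypCount G (dualVec a) := by
        refine Finset.sum_congr rfl (fun a _ => ?_)
        rw [hypCount_eq_sum]
    _ ≤ ∑ _a ∈ A, c := Finset.sum_le_sum (fun a haA => by
        refine hc _ (dualVec_ne_zero ?_)
        simpa [hA] using haA)
    _ = A.card * c := by rw [Finset.sum_const, smul_eq_mul]
    _ ≤ Fintype.card (Fin k → F) * c := Nat.mul_le_mul_right _ (Finset.card_le_univ A)


lemma quotient_code [Fintype F] {n K d : ℕ} (hK : 1 ≤ K) (G : Fin n → Fin (K + 1) → F)
    (hG : IsCodePS F n (K + 1) d G) (P : Fin (K + 1) → F) (hP : P ≠ 0)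
    (T : Finset (Fin n)) (hT : ∀ i, i ∈ T ↔ ∃ c : F, G i = c • P) :
    ∃ d' : ℕ, d ≤ d' ∧ ∃ G' : Fin (Tᶜ.card) → Fin K → F, IsCodePS F Tᶜ.card K d' G' := by
  classical
  obtain ⟨hd, hnz, hspan, hbound, -⟩ := hG
  obtain ⟨j₀, hj₀⟩ : ∃ j, P j ≠ 0 := by
    by_contra h
    push_neg at h
    exact hP (funext fun j => h j)
  set φ₀ : (Fin (K + 1) → F) →ₗ[F] F := (P j₀)⁻¹ • LinearMap.proj j₀ with hφ₀def
  set π : (Fin (K + 1) → F) →ₗ[F] (Fin K → F) :=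
    (LinearMap.funLeft F F j₀.succAbove).comp (LinearMap.id - φ₀.smulRight P) with hπdef
  have hπ_apply : ∀ (x : Fin (K+1) → F) (r : Fin K),
      π x r = x (j₀.succAbove r) - (P j₀)⁻¹ * x j₀ * P (j₀.succAbove r) := by
    intro x r
    simp [hπdef, hφ₀def, LinearMap.funLeft_apply, mul_assoc]
  have hπP : π P = 0 := by
    funext r
    rw [hπ_apply]
    simp [inv_mul_cancel₀ hj₀]
  have hπ_zero : ∀ x : Fin (K+1) → F, π x = 0 ↔ ∃ c : F, x = c • P := by
    intro x
    constructor
    · intro h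
      refine ⟨(P j₀)⁻¹ * x j₀, funext fun idx => ?_⟩
      rcases eq_or_ne idx j₀ with rfl | hne
      · simp only [Pi.smul_apply, smul_eq_mul]
        field_simp
      · obtain ⟨r, hr⟩ := Fin.exists_succAbove_eq hne
        have h2 := congrFun h r
        rw [hπ_apply] at h2
        simp only [Pi.zero_apply] at h2
        rw [← hr]
        simp only [Pi.smul_apply, smul_eq_mul]
        have h3 := sub_eq_zero.mp h2
        rw [h3]
    · rintro ⟨c, rfl⟩
      rw [map_smul, hπP, smul_zero]
  have hπ_surj : Function.Surjective π := by
    intro y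
    refine ⟨j₀.insertNth 0 y, funext fun r => ?_⟩
    rw [hπ_apply]
    simp
  set N' := Tᶜ.card with hN'
  set e := Tᶜ.equivFin with he
  set G' : Fin N' → Fin K → F := fun t => π (G ((e.symm t : ↥(Tᶜ)) : Fin n)) with hG'def
  have hrel : ∀ ψ : (Fin K → F) →ₗ[F] F, hypCount G' ψ + T.card = hypCount G (ψ.comp π) := by
    intro ψ
    have h1 : ∑ t : Fin N', (if ψ (G' t) = 0 then 1 else 0 : ℕ)
        = ∑ i ∈ Tᶜ, if ψ (π (G i)) = 0 then 1 else 0 := by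
      rw [← Finset.sum_coe_sort Tᶜ (fun i => if ψ (π (G i)) = 0 then 1 else 0)]
      exact Equiv.sum_comp e.symm (fun x : ↥(Tᶜ) => if ψ (π (G x)) = 0 then 1 else 0)
    have h2 : ∑ i ∈ T, (if ψ (π (G i)) = 0 then 1 else 0 : ℕ) = T.card := by
      rw [Finset.sum_congr rfl (fun i hi => ?_), Finset.sum_const, smul_eq_mul, mul_one]
      obtain ⟨c, hc⟩ := (hT i).1 hi
      have hz : π (G i) = 0 := (hπ_zero _).2 ⟨c, hc⟩
      rw [hz, map_zero, if_pos rfl]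
    have h3 := Finset.sum_add_sum_compl T (fun i => if ψ (π (G i)) = 0 then 1 else 0 : Fin n → ℕ)
    rw [hypCount_eq_sum, hypCount_eq_sum]
    have h4 : ∑ i, (if (ψ.comp π) (G i) = 0 then 1 else 0 : ℕ)
        = ∑ i, if ψ (π (G i)) = 0 then 1 else 0 :=
      Finset.sum_congr rfl (fun i _ => by rw [LinearMap.comp_apply])
    omega
  have hnz' : ∀ t, G' t ≠ 0 := by
    intro t h
    have hi : ((e.symm t : ↥(Tᶜ)) : Fin n) ∈ Tᶜ := (e.symm t).2
    obtain ⟨c, hc⟩ := (hπ_zero _).1 h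
    exact (Finset.mem_compl.mp hi) ((hT _).2 ⟨c, hc⟩)
  have hspan' : Submodule.span F (Set.range G') = ⊤ := by
    rw [eq_top_iff]
    have htop : Submodule.map π (Submodule.span F (Set.range G)) = ⊤ := by
      rw [hspan, Submodule.map_top, LinearMap.range_eq_top.2 hπ_surj]
    rw [← htop, Submodule.map_span]
    rw [Submodule.span_le]
    rintro _ ⟨_, ⟨i, rfl⟩, rfl⟩
    by_cases hiT : i ∈ T
    · obtain ⟨c, hc⟩ := (hT i).1 hiT
      have : π (G i) = 0 := (hπ_zero _).2 ⟨c, hc⟩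
      rw [this]
      exact Submodule.zero_mem _
    · have hi : i ∈ Tᶜ := Finset.mem_compl.mpr hiT
      apply Submodule.subset_span
      refine ⟨e ⟨i, hi⟩, ?_⟩
      rw [hG'def]
      simp
  set A : Finset (Fin K → F) := Finset.univ.filter (fun a => a ≠ 0) with hA
  have hAne : A.Nonempty := by
    refine ⟨Pi.single ⟨0, hK⟩ 1, ?_⟩
    simp only [hA, Finset.mem_filter, Finset.mem_univ, true_and]
    intro h
    have := congrFun h ⟨0, hK⟩
    simp at this
  set img := A.image (fun a => hypCount G' (dualVec a)) with himg
  have himgne : img.Nonempty := hAne.image _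
  set M := img.max' himgne with hM
  obtain ⟨a₀, ha₀A, ha₀⟩ := Finset.mem_image.mp (img.max'_mem himgne)
  have ha₀ne : dualVec a₀ ≠ 0 := by
    refine dualVec_ne_zero ?_
    simpa [hA] using ha₀A
  have hub : ∀ ψ : (Fin K → F) →ₗ[F] F, ψ ≠ 0 → hypCount G' ψ ≤ M := by
    intro ψ hψ
    obtain ⟨a, hadv, hane⟩ := dualVec_surj ψ
    rw [← hadv]
    refine img.le_max' _ (Finset.mem_image_of_mem _ ?_)
    simp [hA, hane hψ]
  have hcard : T.card + N' = n := by
    rw [hN', Finset.card_add_card_compl]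
    simp
  have hcompne : ∀ ψ : (Fin K → F) →ₗ[F] F, ψ ≠ 0 → ψ.comp π ≠ 0 := by
    intro ψ hψ h
    apply hψ
    apply LinearMap.ext
    intro y
    obtain ⟨x, rfl⟩ := hπ_surj y
    exact DFunLike.congr_fun h x
  have hMb : M + d ≤ N' := by
    have hb := hbound _ (hcompne _ ha₀ne)
    have hr := hrel (dualVec a₀)
    omega
  refine ⟨N' - M, by omega, G', ?_, hnz', hspan', ?_, dualVec a₀, ha₀ne, ?_⟩
  · omega
  · intro ψ hψ
    have := hub ψ hψ
    omega
  · omega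


end Aux

/-- If `G` is a non-degenerate `[n,k,d]_q` code with `k > 2`, Singleton defect `s > 0`,
and `n > m^{s-1}(k-1,q) + 2`, then `G` is projective (all multiplicities are `1`). -/
theorem long_code_projective_of_mPar (F : Type*) [Field F] [Fintype F] [DecidableEq F]
    (n k d s : ℕ) (G : Fin n → Fin k → F)
    (hk : 2 < k) (hspos : 0 < s) (hG : IsCodePS F n k d G) (hs : d + k + s = n + 1)
    (hn : mPar F (s - 1) (k - 1) + 2 < n) :
    ∀ i j : Fin n, (∃ c : F, G i = c • G j) → i = j := by
  intro i j hij
  by_contra hne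
  obtain ⟨K, rfl⟩ : ∃ K, k = K + 1 := ⟨k - 1, by omega⟩
  have hK2 : 2 ≤ K := by omega
  classical
  set P := G j with hPdef
  set T : Finset (Fin n) := Finset.univ.filter (fun i' => ∃ c : F, G i' = c • P) with hTdef
  have hT : ∀ i', i' ∈ T ↔ ∃ c : F, G i' = c • P := by
    intro i'
    simp [hTdef]
  have hiT : i ∈ T := (hT i).2 hij
  have hjT : j ∈ T := (hT j).2 ⟨1, (one_smul F P).symm⟩
  have hTcard : 2 ≤ T.card := Finset.one_lt_card.2 ⟨i, hiT, j, hjT, hne⟩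
  obtain ⟨d', hdd', G', hG'⟩ := quotient_code (by omega) G hG P (hG.2.1 j) T hT
  have hcard : T.card + Tᶜ.card = n := by
    rw [Finset.card_add_card_compl]
    simp
  -- pad the quotient code up to length L = d' + K + s - 2
  have hLge : Tᶜ.card ≤ d' + K + s - 2 := by omega
  set t := d' + K + s - 2 - Tᶜ.card with ht
  obtain ⟨G'', hG''⟩ := pad_iter hK2 t G' hG'
  -- membership in the mPar set
  set S : Set ℕ :=
    {m : ℕ | ∃ d0 : ℕ, ∃ G0 : Fin m → Fin K → F, IsCodePS F m K d0 G0 ∧ d0 + K + (s - 1) = m + 1}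
    with hS
  have hmem : (Tᶜ.card + t) ∈ S := ⟨d', G'', hG'', by omega⟩
  have hbdd : BddAbove S := by
    refine ⟨Fintype.card (Fin K → F) * (K + s), fun N hN => ?_⟩
    obtain ⟨d0, G0, hG0, heq⟩ := hN
    have hle := length_le_of_hypCount_le hK2 G0 hG0.2.1 (K + s) (fun ψ hψ => by
      have := hG0.2.2.2.1 ψ hψ
      omega)
    exact le_trans hle le_rfl
  have hsup : Tᶜ.card + t ≤ mPar F (s - 1) K := le_csSup hbdd hmem
  have hfin : mPar F (s - 1) (K + 1 - 1) = mPar F (s - 1) K := rfl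
  rw [hfin] at hn
  omega
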